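/- There exists C > 0 such that for all η = (η₁,η₂,η₃) ∈ ℝ³ with η ≠ 0 and 3η₁² ≠ η₂²+η₃², and for each index pair (j,k) ∈ {(2,1),(2,2),(3,1),(3,2)}: |C_{j,k}(η)| ≤ C (η₁²+η₂²+η₃²)^{1/2}(3η₁²−η₂²−η₃²)^{−2}, and |∂_{η_j}C_{j,k}(η)| ≤ C [ (3η₁²−η₂²−η₃²)^{−2} + (η₁²+η₂²+η₃²) |3η₁²−η₂²−η₃²|^{−3} ]. -/

import Mathlib

noncomputable section

/-- p(η) = (η₁²+η₂²+η₃²)(3η₁²−η₂²−η₃²)². -/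
def pZK (η₁ η₂ η₃ : ℝ) : ℝ :=
  (η₁ ^ 2 + η₂ ^ 2 + η₃ ^ 2) * (3 * η₁ ^ 2 - η₂ ^ 2 - η₃ ^ 2) ^ 2

def A0ZK (η₁ η₂ η₃ : ℝ) : ℝ :=
  (9 * η₁ ^ 4 + 30 * η₁ ^ 2 * (η₂ ^ 2 + η₃ ^ 2) + 5 * (η₂ ^ 2 + η₃ ^ 2) ^ 2)
    / (3 * pZK η₁ η₂ η₃)

def A1ZK (η₁ η₂ η₃ : ℝ) : ℝ :=
  -(η₁ * (9 * η₁ ^ 4 + 18 * η₁ ^ 2 * (η₂ ^ 2 + η₃ ^ 2) + (η₂ ^ 2 + η₃ ^ 2) ^ 2))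
    / (3 * pZK η₁ η₂ η₃)

def A2ZK (η₁ η₂ η₃ : ℝ) : ℝ :=
  -(4 * η₂ * (η₂ ^ 2 + η₃ ^ 2) * (3 * η₁ ^ 2 + η₂ ^ 2 + η₃ ^ 2)) / (3 * pZK η₁ η₂ η₃)

def A3ZK (η₁ η₂ η₃ : ℝ) : ℝ :=
  -(4 * η₃ * (η₂ ^ 2 + η₃ ^ 2) * (3 * η₁ ^ 2 + η₂ ^ 2 + η₃ ^ 2)) / (3 * pZK η₁ η₂ η₃)

def B01ZK (η₁ η₂ η₃ : ℝ) : ℝ := -(4 * η₁ * (η₂ ^ 2 + η₃ ^ 2)) / pZK η₁ η₂ η₃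

def B02ZK (η₁ η₂ η₃ : ℝ) : ℝ :=
  -(2 * η₂ * (3 * η₁ ^ 2 + η₂ ^ 2 + η₃ ^ 2)) / (3 * pZK η₁ η₂ η₃)

def B03ZK (η₁ η₂ η₃ : ℝ) : ℝ :=
  -(2 * η₃ * (3 * η₁ ^ 2 + η₂ ^ 2 + η₃ ^ 2)) / (3 * pZK η₁ η₂ η₃)

def B11ZK (η₁ η₂ η₃ : ℝ) : ℝ := 4 * η₁ ^ 2 * (η₂ ^ 2 + η₃ ^ 2) / pZK η₁ η₂ η₃

def B12ZK (η₁ η₂ η₃ : ℝ) : ℝ :=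
  2 * η₁ * η₂ * (3 * η₁ ^ 2 + η₂ ^ 2 + η₃ ^ 2) / (3 * pZK η₁ η₂ η₃)

def B13ZK (η₁ η₂ η₃ : ℝ) : ℝ :=
  2 * η₁ * η₃ * (3 * η₁ ^ 2 + η₂ ^ 2 + η₃ ^ 2) / (3 * pZK η₁ η₂ η₃)

def B21ZK (η₁ η₂ η₃ : ℝ) : ℝ := 4 * η₁ * η₂ * (η₂ ^ 2 + η₃ ^ 2) / pZK η₁ η₂ η₃

def B31ZK (η₁ η₂ η₃ : ℝ) : ℝ := 4 * η₁ * η₃ * (η₂ ^ 2 + η₃ ^ 2) / pZK η₁ η₂ η₃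

def B22ZK (η₁ η₂ η₃ : ℝ) : ℝ :=
  2 * (η₂ ^ 2 + η₃ ^ 2) * (3 * η₁ ^ 2 + η₂ ^ 2 + η₃ ^ 2) / (3 * pZK η₁ η₂ η₃)

def B32ZK (η₁ η₂ η₃ : ℝ) : ℝ :=
  2 * (η₂ ^ 2 + η₃ ^ 2) * (3 * η₁ ^ 2 + η₂ ^ 2 + η₃ ^ 2) / (3 * pZK η₁ η₂ η₃)

def C21ZK (η₁ η₂ η₃ : ℝ) : ℝ :=
  -(2 * η₃ * (3 * η₁ ^ 2 + η₂ ^ 2 + η₃ ^ 2)) / (3 * pZK η₁ η₂ η₃)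

def C31ZK (η₁ η₂ η₃ : ℝ) : ℝ :=
  -(2 * η₂ * (3 * η₁ ^ 2 + η₂ ^ 2 + η₃ ^ 2)) / (3 * pZK η₁ η₂ η₃)

def C22ZK (η₁ η₂ η₃ : ℝ) : ℝ :=
  2 * η₂ * (3 * η₁ ^ 2 + η₂ ^ 2 + η₃ ^ 2) / (3 * pZK η₁ η₂ η₃)

def C32ZK (η₁ η₂ η₃ : ℝ) : ℝ :=
  2 * η₃ * (3 * η₁ ^ 2 + η₂ ^ 2 + η₃ ^ 2) / (3 * pZK η₁ η₂ η₃)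



lemma boundFun (x y z w : ℝ) (h0 : (0:ℝ) < x^2+y^2+z^2)
    (hq : 3*x^2-y^2-z^2 ≠ 0) (hw : w^2 ≤ x^2+y^2+z^2) :
    |2*w*(3*x^2+y^2+z^2) / (3*((x^2+y^2+z^2)*(3*x^2-y^2-z^2)^2))|
      ≤ 2 * (x^2+y^2+z^2) ^ ((1:ℝ)/2) * (((3*x^2-y^2-z^2)^2)⁻¹) := by
  have hq2 : (0:ℝ) < (3*x^2-y^2-z^2)^2 := by positivity
  have hs0 : 0 < Real.sqrt (x^2+y^2+z^2) := Real.sqrt_pos.2 h0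
  have hs2 : (Real.sqrt (x^2+y^2+z^2))^2 = x^2+y^2+z^2 := Real.sq_sqrt h0.le
  have hws : |w| ≤ Real.sqrt (x^2+y^2+z^2) := by
    rw [← Real.sqrt_sq_eq_abs]
    exact Real.sqrt_le_sqrt hw
  rw [← Real.sqrt_eq_rpow, abs_div, abs_of_pos (by positivity : (0:ℝ) < 3*((x^2+y^2+z^2)*(3*x^2-y^2-z^2)^2))]
  rw [div_le_iff₀ (by positivity)]
  have hN0 : (0:ℝ) ≤ 3*x^2+y^2+z^2 := by positivity
  have habs : |2*w*(3*x^2+y^2+z^2)| = 2 * |w| * (3*x^2+y^2+z^2) := by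
    simp only [abs_mul, abs_of_nonneg hN0]
    norm_num
  rw [habs]
  have key : 2 * |w| * (3*x^2+y^2+z^2) ≤ 6 * Real.sqrt (x^2+y^2+z^2) * (x^2+y^2+z^2) := by
    nlinarith [abs_nonneg w, mul_le_mul hws (le_refl (3*x^2+y^2+z^2)) hN0 hs0.le, hs2]
  calc 2 * |w| * (3*x^2+y^2+z^2) ≤ 6 * Real.sqrt (x^2+y^2+z^2) * (x^2+y^2+z^2) := key
    _ = 2 * Real.sqrt (x^2+y^2+z^2) * ((3*x^2-y^2-z^2)^2)⁻¹ * (3*((x^2+y^2+z^2)*(3*x^2-y^2-z^2)^2)) := by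
        have hinv : ((3*x^2-y^2-z^2)^2)⁻¹ * (3*x^2-y^2-z^2)^2 = 1 := inv_mul_cancel₀ (ne_of_gt hq2)
        linear_combination (-(6 * Real.sqrt (x^2+y^2+z^2) * (x^2+y^2+z^2))) * hinv



lemma absTA (y z x2 N R q : ℝ) (hx2 : 0 ≤ x2) (hx2R : x2 ≤ R)
    (hyz : 2*(|y| * |z|) ≤ R) (hN0 : 0 ≤ N) (hNR : N ≤ 3*R) (hR : 0 ≤ R) :
    |24*y*z*x2*q^2 - 24*y*z*N*R*q| ≤ 90*R^2*q^2 + 90*R^3*|q| := by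
  have B1 : 0 ≤ R*R - 2*(|y| * |z|)*x2 := sub_nonneg.2 (mul_le_mul hyz hx2R hx2 hR)
  have B2 : 0 ≤ R*(3*R) - 2*(|y| * |z|)*N := sub_nonneg.2 (mul_le_mul hyz hNR hN0 hR)
  calc |24*y*z*x2*q^2 - 24*y*z*N*R*q| ≤ |24*y*z*x2*q^2| + |24*y*z*N*R*q| := abs_sub _ _
    _ = 24*(|y| * |z|)*x2*q^2 + 24*(|y| * |z|)*N*R*|q| := by
        simp only [abs_mul, abs_pow, sq_abs, abs_of_nonneg hx2, abs_of_nonneg hN0,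
          abs_of_nonneg hR]
        norm_num
        ring
    _ ≤ 90*R^2*q^2 + 90*R^3*|q| := by
        nlinarith [mul_nonneg B1 (sq_nonneg q), mul_nonneg B2 (mul_nonneg hR (abs_nonneg q)),
          mul_nonneg (mul_nonneg hR hR) (sq_nonneg q),
          mul_nonneg (mul_nonneg (mul_nonneg hR hR) hR) (abs_nonneg q)]

lemma absTB (y2 N R q : ℝ) (hy2 : 0 ≤ y2) (hy2R : y2 ≤ R)
    (hN0 : 0 ≤ N) (hNR : N ≤ 3*R) (hR : 0 ≤ R) :
    |6*N*R*q^2 + 12*y2*R*q^2 - 12*y2*N*q^2 + 24*y2*N*R*q| ≤ 90*R^2*q^2 + 90*R^3*|q| := by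
  have h1 : |24*y2*N*R*q| = 24*y2*N*R*|q| := by
    simp only [abs_mul, abs_of_nonneg hy2, abs_of_nonneg hN0, abs_of_nonneg hR]
    norm_num
  have h21 : -(24*y2*N*R*|q|) ≤ 24*y2*N*R*q := by rw [← h1]; exact neg_abs_le _
  have h22 : 24*y2*N*R*q ≤ 24*y2*N*R*|q| := by rw [← h1]; exact le_abs_self _
  have A : 0 ≤ R*(3*R) - y2*N := sub_nonneg.2 (mul_le_mul hy2R hNR hN0 hR)
  rw [abs_le]
  constructor <;>
  nlinarith [h21, h22, mul_nonneg A (sq_nonneg q), mul_nonneg A (mul_nonneg hR (abs_nonneg q)),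
    mul_nonneg (mul_nonneg (sub_nonneg.2 hNR) hR) (sq_nonneg q),
    mul_nonneg (mul_nonneg (sub_nonneg.2 hy2R) hR) (sq_nonneg q),
    mul_nonneg (mul_nonneg hy2 hN0) (sq_nonneg q),
    mul_nonneg (mul_nonneg hN0 hR) (sq_nonneg q),
    mul_nonneg (mul_nonneg hy2 hR) (sq_nonneg q),
    mul_nonneg (mul_nonneg (mul_nonneg hR hR) hR) (abs_nonneg q),
    mul_nonneg (mul_nonneg hR hR) (sq_nonneg q)]

lemma tailBound (r2 q T : ℝ) (h0 : 0 < r2) (hq : q ≠ 0)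
    (hT : |T| ≤ 90*r2^2*q^2 + 90*r2^3*|q|) :
    |T / (9*r2^2*q^4)| ≤ 10*((q^2)⁻¹ + r2*(|q|^3)⁻¹) := by
  have ha : 0 < |q| := abs_pos.2 hq
  have haneq : |q| ≠ 0 := ne_of_gt ha
  have hr2ne : r2 ≠ 0 := ne_of_gt h0
  rw [abs_div, abs_of_pos (by positivity : (0:ℝ) < 9*r2^2*q^4)]
  calc |T| / (9*r2^2*q^4) ≤ (90*r2^2*q^2 + 90*r2^3*|q|) / (9*r2^2*q^4) := by
        gcongr
    _ = 10*((q^2)⁻¹ + r2*(|q|^3)⁻¹) := by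
        have h1 : q^2 = |q|^2 := (sq_abs q).symm
        have h4 : q^4 = |q|^4 := by rw [show (q:ℝ)^4 = (q^2)^2 from by ring, h1]; ring
        field_simp
        linear_combination (-(90*r2)) * h4

lemma derivABound (x y z : ℝ) (h0 : (0:ℝ) < x^2+y^2+z^2) (hq : 3*x^2-y^2-z^2 ≠ 0) :
    |deriv (fun s => -(2*z*(3*x^2+s^2+z^2)) / (3*((x^2+s^2+z^2)*(3*x^2-s^2-z^2)^2))) y|
      ≤ 10*(((3*x^2-y^2-z^2)^2)⁻¹ + (x^2+y^2+z^2)*(|3*x^2-y^2-z^2|^3)⁻¹) := by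
  have hderiv : deriv (fun s => -(2*z*(3*x^2+s^2+z^2)) / (3*((x^2+s^2+z^2)*(3*x^2-s^2-z^2)^2))) y
      = (24*y*z*x^2*(3*x^2-y^2-z^2)^2
          - 24*y*z*(3*x^2+y^2+z^2)*(x^2+y^2+z^2)*(3*x^2-y^2-z^2))
        / (9*(x^2+y^2+z^2)^2*(3*x^2-y^2-z^2)^4) := by
    have hx2 : HasDerivAt (fun s : ℝ => s^2) (2*y) y := by
      simpa using hasDerivAt_pow 2 y
    have hN : HasDerivAt (fun s : ℝ => 3*x^2+s^2+z^2) (2*y) y := by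
      simpa using (hx2.const_add (3*x^2)).add_const (z^2)
    have hR : HasDerivAt (fun s : ℝ => x^2+s^2+z^2) (2*y) y := by
      simpa using (hx2.const_add (x^2)).add_const (z^2)
    have hQ : HasDerivAt (fun s : ℝ => 3*x^2-s^2-z^2) (-(2*y)) y := by
      simpa using (hx2.const_sub (3*x^2)).sub_const (z^2)
    have hQ2 : HasDerivAt (fun s : ℝ => (3*x^2-s^2-z^2)^2)
        (2*(3*x^2-y^2-z^2)*(-(2*y))) y := by
      simpa using hQ.fun_pow 2
    have hden : HasDerivAt (fun s : ℝ => 3*((x^2+s^2+z^2)*(3*x^2-s^2-z^2)^2))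
        (3*((2*y)*(3*x^2-y^2-z^2)^2 + (x^2+y^2+z^2)*(2*(3*x^2-y^2-z^2)*(-(2*y))))) y :=
      (hR.mul hQ2).const_mul 3
    have hnum : HasDerivAt (fun s : ℝ => -(2*z*(3*x^2+s^2+z^2))) (-(2*z*(2*y))) y :=
      (hN.const_mul (2*z)).neg
    have hdne : 3*((x^2+y^2+z^2)*(3*x^2-y^2-z^2)^2) ≠ 0 := by positivity
    have hf := hnum.fun_div hden hdne
    rw [hf.deriv]
    have hr2ne : x^2+y^2+z^2 ≠ 0 := ne_of_gt h0
    field_simp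
    ring
  rw [hderiv]
  exact tailBound (x^2+y^2+z^2) (3*x^2-y^2-z^2) _ h0 hq
    (absTA y z (x^2) (3*x^2+y^2+z^2) (x^2+y^2+z^2) (3*x^2-y^2-z^2)
      (by positivity) (by nlinarith [sq_nonneg y, sq_nonneg z])
      (by nlinarith [sq_nonneg (|y| - |z|), sq_abs y, sq_abs z, sq_nonneg x])
      (by positivity) (by nlinarith [sq_nonneg y, sq_nonneg z]) (by positivity))

lemma derivBBound (x y z : ℝ) (h0 : (0:ℝ) < x^2+y^2+z^2) (hq : 3*x^2-y^2-z^2 ≠ 0) :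
    |deriv (fun s => 2*s*(3*x^2+s^2+z^2) / (3*((x^2+s^2+z^2)*(3*x^2-s^2-z^2)^2))) y|
      ≤ 10*(((3*x^2-y^2-z^2)^2)⁻¹ + (x^2+y^2+z^2)*(|3*x^2-y^2-z^2|^3)⁻¹) := by
  have hderiv : deriv (fun s => 2*s*(3*x^2+s^2+z^2) / (3*((x^2+s^2+z^2)*(3*x^2-s^2-z^2)^2))) y
      = (6*(3*x^2+y^2+z^2)*(x^2+y^2+z^2)*(3*x^2-y^2-z^2)^2
          + 12*(y^2)*(x^2+y^2+z^2)*(3*x^2-y^2-z^2)^2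
          - 12*(y^2)*(3*x^2+y^2+z^2)*(3*x^2-y^2-z^2)^2
          + 24*(y^2)*(3*x^2+y^2+z^2)*(x^2+y^2+z^2)*(3*x^2-y^2-z^2))
        / (9*(x^2+y^2+z^2)^2*(3*x^2-y^2-z^2)^4) := by
    have hx2 : HasDerivAt (fun s : ℝ => s^2) (2*y) y := by
      simpa using hasDerivAt_pow 2 y
    have hN : HasDerivAt (fun s : ℝ => 3*x^2+s^2+z^2) (2*y) y := by
      simpa using (hx2.const_add (3*x^2)).add_const (z^2)
    have hR : HasDerivAt (fun s : ℝ => x^2+s^2+z^2) (2*y) y := by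
      simpa using (hx2.const_add (x^2)).add_const (z^2)
    have hQ : HasDerivAt (fun s : ℝ => 3*x^2-s^2-z^2) (-(2*y)) y := by
      simpa using (hx2.const_sub (3*x^2)).sub_const (z^2)
    have hQ2 : HasDerivAt (fun s : ℝ => (3*x^2-s^2-z^2)^2)
        (2*(3*x^2-y^2-z^2)*(-(2*y))) y := by
      simpa using hQ.fun_pow 2
    have hden : HasDerivAt (fun s : ℝ => 3*((x^2+s^2+z^2)*(3*x^2-s^2-z^2)^2))
        (3*((2*y)*(3*x^2-y^2-z^2)^2 + (x^2+y^2+z^2)*(2*(3*x^2-y^2-z^2)*(-(2*y))))) y :=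
      (hR.mul hQ2).const_mul 3
    have h2s : HasDerivAt (fun s : ℝ => 2*s) 2 y := by
      simpa using (hasDerivAt_id y).const_mul 2
    have hnum : HasDerivAt (fun s : ℝ => 2*s*(3*x^2+s^2+z^2))
        (2*(3*x^2+y^2+z^2) + 2*y*(2*y)) y := h2s.mul hN
    have hdne : 3*((x^2+y^2+z^2)*(3*x^2-y^2-z^2)^2) ≠ 0 := by positivity
    have hf := hnum.fun_div hden hdne
    rw [hf.deriv]
    have hr2ne : x^2+y^2+z^2 ≠ 0 := ne_of_gt h0
    field_simp
    ring
  rw [hderiv]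
  exact tailBound (x^2+y^2+z^2) (3*x^2-y^2-z^2) _ h0 hq
    (absTB (y^2) (3*x^2+y^2+z^2) (x^2+y^2+z^2) (3*x^2-y^2-z^2)
      (by positivity) (by nlinarith [sq_nonneg x, sq_nonneg z])
      (by positivity) (by nlinarith [sq_nonneg y, sq_nonneg z]) (by positivity))


set_option maxHeartbeats 2000000 in
/-- Bounds on C_{j,k} and on ∂_{η_j}C_{j,k} for (j,k) ∈ {(2,1),(2,2),(3,1),(3,2)}. -/
theorem Cjk_bounds :
    ∃ C > 0, ∀ η₁ η₂ η₃ : ℝ, ¬(η₁ = 0 ∧ η₂ = 0 ∧ η₃ = 0) →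
      3 * η₁ ^ 2 ≠ η₂ ^ 2 + η₃ ^ 2 →
      (|C21ZK η₁ η₂ η₃| ≤ C * (η₁ ^ 2 + η₂ ^ 2 + η₃ ^ 2) ^ ((1 : ℝ) / 2)
          * ((3 * η₁ ^ 2 - η₂ ^ 2 - η₃ ^ 2) ^ 2)⁻¹) ∧
      (|C22ZK η₁ η₂ η₃| ≤ C * (η₁ ^ 2 + η₂ ^ 2 + η₃ ^ 2) ^ ((1 : ℝ) / 2)
          * ((3 * η₁ ^ 2 - η₂ ^ 2 - η₃ ^ 2) ^ 2)⁻¹) ∧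
      (|C31ZK η₁ η₂ η₃| ≤ C * (η₁ ^ 2 + η₂ ^ 2 + η₃ ^ 2) ^ ((1 : ℝ) / 2)
          * ((3 * η₁ ^ 2 - η₂ ^ 2 - η₃ ^ 2) ^ 2)⁻¹) ∧
      (|C32ZK η₁ η₂ η₃| ≤ C * (η₁ ^ 2 + η₂ ^ 2 + η₃ ^ 2) ^ ((1 : ℝ) / 2)
          * ((3 * η₁ ^ 2 - η₂ ^ 2 - η₃ ^ 2) ^ 2)⁻¹) ∧
      (|deriv (fun s => C21ZK η₁ s η₃) η₂|
          ≤ C * (((3 * η₁ ^ 2 - η₂ ^ 2 - η₃ ^ 2) ^ 2)⁻¹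
              + (η₁ ^ 2 + η₂ ^ 2 + η₃ ^ 2) * (|3 * η₁ ^ 2 - η₂ ^ 2 - η₃ ^ 2| ^ 3)⁻¹)) ∧
      (|deriv (fun s => C22ZK η₁ s η₃) η₂|
          ≤ C * (((3 * η₁ ^ 2 - η₂ ^ 2 - η₃ ^ 2) ^ 2)⁻¹
              + (η₁ ^ 2 + η₂ ^ 2 + η₃ ^ 2) * (|3 * η₁ ^ 2 - η₂ ^ 2 - η₃ ^ 2| ^ 3)⁻¹)) ∧
      (|deriv (fun s => C31ZK η₁ η₂ s) η₃|
          ≤ C * (((3 * η₁ ^ 2 - η₂ ^ 2 - η₃ ^ 2) ^ 2)⁻¹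
              + (η₁ ^ 2 + η₂ ^ 2 + η₃ ^ 2) * (|3 * η₁ ^ 2 - η₂ ^ 2 - η₃ ^ 2| ^ 3)⁻¹)) ∧
      (|deriv (fun s => C32ZK η₁ η₂ s) η₃|
          ≤ C * (((3 * η₁ ^ 2 - η₂ ^ 2 - η₃ ^ 2) ^ 2)⁻¹
              + (η₁ ^ 2 + η₂ ^ 2 + η₃ ^ 2) * (|3 * η₁ ^ 2 - η₂ ^ 2 - η₃ ^ 2| ^ 3)⁻¹)) := by
  refine ⟨10, by norm_num, ?_⟩
  intro η₁ η₂ η₃ hne hq3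
  have h0 : (0:ℝ) < η₁^2+η₂^2+η₃^2 := by
    rcases (by tauto : η₁ ≠ 0 ∨ η₂ ≠ 0 ∨ η₃ ≠ 0) with h|h|h <;> positivity
  have hqne : 3*η₁^2-η₂^2-η₃^2 ≠ 0 := fun h => hq3 (by linarith)
  have hP : (0:ℝ) ≤ (η₁^2+η₂^2+η₃^2) ^ ((1:ℝ)/2) := Real.rpow_nonneg h0.le _
  have hQ : (0:ℝ) ≤ ((3*η₁^2-η₂^2-η₃^2)^2)⁻¹ := by positivity
  have fb : ∀ w : ℝ, w^2 ≤ η₁^2+η₂^2+η₃^2 →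
      |2*w*(3*η₁^2+η₂^2+η₃^2) / (3*((η₁^2+η₂^2+η₃^2)*(3*η₁^2-η₂^2-η₃^2)^2))|
        ≤ 10 * (η₁^2+η₂^2+η₃^2) ^ ((1:ℝ)/2) * (((3*η₁^2-η₂^2-η₃^2)^2)⁻¹) := by
    intro w hw
    have := boundFun η₁ η₂ η₃ w h0 hqne hw
    nlinarith [mul_nonneg hP hQ]
  have h0' : (0:ℝ) < η₁^2+η₃^2+η₂^2 := by linarith
  have hq' : 3*η₁^2-η₃^2-η₂^2 ≠ 0 := fun h => hqne (by linarith)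
  have e1 : 3*η₁^2-η₃^2-η₂^2 = 3*η₁^2-η₂^2-η₃^2 := by ring
  have e2 : η₁^2+η₃^2+η₂^2 = η₁^2+η₂^2+η₃^2 := by ring
  refine ⟨?_, ?_, ?_, ?_, ?_, ?_, ?_, ?_⟩
  · rw [show C21ZK η₁ η₂ η₃ = -(2*η₃*(3*η₁^2+η₂^2+η₃^2)
        / (3*((η₁^2+η₂^2+η₃^2)*(3*η₁^2-η₂^2-η₃^2)^2))) from by unfold C21ZK pZK; ring,
      abs_neg]
    exact fb η₃ (by nlinarith [sq_nonneg η₁, sq_nonneg η₂])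
  · rw [show C22ZK η₁ η₂ η₃ = 2*η₂*(3*η₁^2+η₂^2+η₃^2)
        / (3*((η₁^2+η₂^2+η₃^2)*(3*η₁^2-η₂^2-η₃^2)^2)) from by unfold C22ZK pZK; ring]
    exact fb η₂ (by nlinarith [sq_nonneg η₁, sq_nonneg η₃])
  · rw [show C31ZK η₁ η₂ η₃ = -(2*η₂*(3*η₁^2+η₂^2+η₃^2)
        / (3*((η₁^2+η₂^2+η₃^2)*(3*η₁^2-η₂^2-η₃^2)^2))) from by unfold C31ZK pZK; ring,
      abs_neg]
    exact fb η₂ (by nlinarith [sq_nonneg η₁, sq_nonneg η₃])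
  · rw [show C32ZK η₁ η₂ η₃ = 2*η₃*(3*η₁^2+η₂^2+η₃^2)
        / (3*((η₁^2+η₂^2+η₃^2)*(3*η₁^2-η₂^2-η₃^2)^2)) from by unfold C32ZK pZK; ring]
    exact fb η₃ (by nlinarith [sq_nonneg η₁, sq_nonneg η₂])
  · rw [show (fun s => C21ZK η₁ s η₃) = (fun s => -(2*η₃*(3*η₁^2+s^2+η₃^2))
        / (3*((η₁^2+s^2+η₃^2)*(3*η₁^2-s^2-η₃^2)^2))) from by
      funext s; unfold C21ZK pZK; ring]
    exact derivABound η₁ η₂ η₃ h0 hqne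
  · rw [show (fun s => C22ZK η₁ s η₃) = (fun s => 2*s*(3*η₁^2+s^2+η₃^2)
        / (3*((η₁^2+s^2+η₃^2)*(3*η₁^2-s^2-η₃^2)^2))) from by
      funext s; unfold C22ZK pZK; ring]
    exact derivBBound η₁ η₂ η₃ h0 hqne
  · rw [show (fun s => C31ZK η₁ η₂ s) = (fun s => -(2*η₂*(3*η₁^2+s^2+η₂^2))
        / (3*((η₁^2+s^2+η₂^2)*(3*η₁^2-s^2-η₂^2)^2))) from by
      funext s; unfold C31ZK pZK; ring]
    have hb := derivABound η₁ η₃ η₂ h0' hq'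
    rw [e1, e2] at hb
    exact hb
  · rw [show (fun s => C32ZK η₁ η₂ s) = (fun s => 2*s*(3*η₁^2+s^2+η₂^2)
        / (3*((η₁^2+s^2+η₂^2)*(3*η₁^2-s^2-η₂^2)^2))) from by
      funext s; unfold C32ZK pZK; ring]
    have hb := derivBBound η₁ η₃ η₂ h0' hq'
    rw [e1, e2] at hb
    exact hb
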